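/- Let K₁,…,K_n ∈ C²₊ and φ₁,…,φ_n ∈ Conc(0,∞) be homogeneous of degrees r₁,…,r_n ∈ [0,1). Then as(φ₁,K₁;…;φ_n,K_n) · as(φ₁,K₁°;…;φ_n,K_n°) ≤ n² ∏_{i=1}^n [φ_i(1)² |K_i| |K_i°|]^{1/n}. -/

import Mathlib

open MeasureTheory Filter

/-- Membership in the class `Conc(0,∞)`. -/
def MemConc (φ : ℝ → ℝ) : Prop :=
  (∀ t : ℝ, 0 < t → 0 < φ t) ∧
    ((∃ c : ℝ, 0 < c ∧ ∀ t : ℝ, 0 < t → φ t = c) ∨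
      (ConcaveOn ℝ (Set.Ioi 0) φ ∧
        Tendsto φ (nhdsWithin 0 (Set.Ioi 0)) (nhds 0) ∧
        Tendsto (fun t => φ t / t) atTop (nhds 0)))


lemma pt_alg {n : ℕ} {a b r : ℝ} (ha : 0 < a) (hb : 0 < b) (φ : ℝ → ℝ)
    (hφ : ∀ t : ℝ, 0 < t → 0 < φ t)
    (hhom : ∀ l t : ℝ, 0 < l → 0 < t → φ (l * t) = l ^ r * φ t) :
    φ (1 / (b * a ^ (n + 1))) * a * b
      = φ 1 * ((a * b) ^ (1 - r) * ((a ^ n)⁻¹) ^ r) := by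
  have hba : 0 < b * a ^ (n + 1) := mul_pos hb (pow_pos ha _)
  have hinv : 0 < 1 / (b * a ^ (n + 1)) := by positivity
  have h1 : φ (1 / (b * a ^ (n + 1))) = (1 / (b * a ^ (n + 1))) ^ r * φ 1 := by
    simpa using hhom (1 / (b * a ^ (n + 1))) 1 hinv one_pos
  rw [h1]
  have hφ1 : 0 < φ 1 := hφ 1 one_pos
  have key : (1 / (b * a ^ (n + 1))) ^ r * (a * b)
      = (a * b) ^ (1 - r) * ((a ^ n)⁻¹) ^ r := by
    have hL : 0 < (1 / (b * a ^ (n + 1))) ^ r * (a * b) := by positivity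
    have hR : 0 < (a * b) ^ (1 - r) * ((a ^ n)⁻¹) ^ r := by positivity
    apply Real.log_injOn_pos (Set.mem_Ioi.2 hL) (Set.mem_Ioi.2 hR)
    rw [Real.log_mul (ne_of_gt (Real.rpow_pos_of_pos hinv r)) (ne_of_gt (mul_pos ha hb)),
      Real.log_mul (ne_of_gt (Real.rpow_pos_of_pos (mul_pos ha hb) (1 - r)))
        (ne_of_gt (Real.rpow_pos_of_pos (inv_pos.2 (pow_pos ha n)) r)),
      Real.log_rpow hinv, Real.log_rpow (mul_pos ha hb),
      Real.log_rpow (inv_pos.2 (pow_pos ha n)),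
      Real.log_mul ha.ne' hb.ne', one_div, Real.log_inv, Real.log_inv,
      Real.log_mul hb.ne' (ne_of_gt (pow_pos ha (n+1))), Real.log_pow, Real.log_pow]
    push_cast
    ring
  calc (1 / (b * a ^ (n + 1))) ^ r * φ 1 * a * b
      = φ 1 * ((1 / (b * a ^ (n + 1))) ^ r * (a * b)) := by ring
    _ = φ 1 * ((a * b) ^ (1 - r) * ((a ^ n)⁻¹) ^ r) := by rw [key]

lemma key_bound {n : ℕ} (hn : 2 ≤ n) {α : Type*} [MeasurableSpace α] [TopologicalSpace α]
    [OpensMeasurableSpace α] [T2Space α] [CompactSpace α] (μ : Measure α) [IsFiniteMeasure μ]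
    (h f : Fin n → α → ℝ)
    (hpos : ∀ i u, 0 < h i u) (fpos : ∀ i u, 0 < f i u)
    (hcont : ∀ i, Continuous (h i)) (fcont : ∀ i, Continuous (f i))
    (V P : Fin n → ℝ)
    (idA : ∀ i, ∫ u, h i u * f i u ∂μ = V i)
    (idB : ∀ i, ∫ u, (h i u ^ n)⁻¹ ∂μ = P i)
    (φ : Fin n → ℝ → ℝ) (hφpos : ∀ i t, 0 < t → 0 < φ i t)
    (r : Fin n → ℝ) (hr : ∀ i, 0 ≤ r i ∧ r i < 1)
    (hhom : ∀ i, ∀ l t : ℝ, 0 < l → 0 < t → φ i (l * t) = l ^ r i * φ i t) :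
    ∫⁻ u, ENNReal.ofReal (∏ i, (φ i (1 / (f i u * h i u ^ (n + 1))) * h i u * f i u)
        ^ ((n : ℝ)⁻¹)) ∂μ
      ≤ ∏ i, (ENNReal.ofReal (φ i 1) * ENNReal.ofReal (V i) ^ (1 - r i)
          * ENNReal.ofReal (P i) ^ (r i)) ^ ((n : ℝ)⁻¹) := by
  have hn0 : (n : ℝ) ≠ 0 := by positivity
  have hcs : ∀ g : α → ℝ, HasCompactSupport g := fun g =>
    IsCompact.of_isClosed_subset isCompact_univ (isClosed_tsupport g) (Set.subset_univ _)
  have IA : ∀ i, Integrable (fun u => h i u * f i u) μ := fun i =>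
    ((hcont i).mul (fcont i)).integrable_of_hasCompactSupport (hcs _)
  have IB : ∀ i, Integrable (fun u => (h i u ^ n)⁻¹) μ := fun i =>
    (((hcont i).pow n).inv₀ (fun u => (pow_pos (hpos i u) n).ne')).integrable_of_hasCompactSupport
      (hcs _)
  -- the ENNReal-valued functions and exponents
  set A : Fin n → α → ENNReal := fun i u => ENNReal.ofReal (h i u * f i u) with hA
  set B : Fin n → α → ENNReal := fun i u => ENNReal.ofReal ((h i u ^ n)⁻¹) with hB
  have hrn : ∀ i u, 0 < h i u * f i u := fun i u => mul_pos (hpos i u) (fpos i u)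
  have hbn : ∀ i u, 0 < (h i u ^ n)⁻¹ := fun i u => inv_pos.2 (pow_pos (hpos i u) n)
  -- pointwise rewriting
  have hpt : ∀ u, ENNReal.ofReal (∏ i, (φ i (1 / (f i u * h i u ^ (n + 1)))
        * h i u * f i u) ^ ((n : ℝ)⁻¹))
      = (∏ i, ENNReal.ofReal (φ i 1) ^ ((n : ℝ)⁻¹))
        * ∏ i, A i u ^ ((1 - r i) * (n : ℝ)⁻¹) * B i u ^ (r i * (n : ℝ)⁻¹) := by
    intro u
    have hxpos : ∀ i, 0 < φ i (1 / (f i u * h i u ^ (n + 1))) * h i u * f i u := by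
      intro i
      have h0 : 0 < φ i (1 / (f i u * h i u ^ (n + 1))) :=
        hφpos i _ (one_div_pos.2 (mul_pos (fpos i u) (pow_pos (hpos i u) _)))
      exact mul_pos (mul_pos h0 (hpos i u)) (fpos i u)
    rw [ENNReal.ofReal_prod_of_nonneg (fun i _ => Real.rpow_nonneg (hxpos i).le _)]
    rw [← Finset.prod_mul_distrib]
    refine Finset.prod_congr rfl (fun i _ => ?_)
    rw [← ENNReal.ofReal_rpow_of_pos (hxpos i),
      pt_alg (hpos i u) (fpos i u) (φ i) (hφpos i) (hhom i),
      ENNReal.ofReal_mul (hφpos i 1 one_pos).le,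
      ENNReal.ofReal_mul (Real.rpow_nonneg (hrn i u).le _),
      ← ENNReal.ofReal_rpow_of_pos (hrn i u), ← ENNReal.ofReal_rpow_of_pos (hbn i u),
      ENNReal.mul_rpow_of_nonneg _ _ (by positivity),
      ENNReal.mul_rpow_of_nonneg _ _ (by positivity),
      ← ENNReal.rpow_mul, ← ENNReal.rpow_mul]
  calc ∫⁻ u, ENNReal.ofReal (∏ i, (φ i (1 / (f i u * h i u ^ (n + 1)))
        * h i u * f i u) ^ ((n : ℝ)⁻¹)) ∂μ
      = (∏ i, ENNReal.ofReal (φ i 1) ^ ((n : ℝ)⁻¹))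
        * ∫⁻ u, ∏ i, A i u ^ ((1 - r i) * (n : ℝ)⁻¹) * B i u ^ (r i * (n : ℝ)⁻¹) ∂μ := by
        simp_rw [hpt]
        exact lintegral_const_mul' _ _ (ENNReal.prod_ne_top (fun i _ =>
          (ENNReal.rpow_lt_top_of_nonneg (by positivity) ENNReal.ofReal_ne_top).ne))
    _ ≤ (∏ i, ENNReal.ofReal (φ i 1) ^ ((n : ℝ)⁻¹))
        * ∏ i, (∫⁻ u, A i u ∂μ) ^ ((1 - r i) * (n : ℝ)⁻¹)
          * (∫⁻ u, B i u ∂μ) ^ (r i * (n : ℝ)⁻¹) := by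
        refine mul_le_mul_right ?_ _
        -- Hölder over the sum type
        have hHolder := ENNReal.lintegral_prod_norm_pow_le (μ := μ)
          (Finset.univ : Finset (Fin n ⊕ Fin n))
          (f := Sum.elim A B)
          (fun j _ => by
            rcases j with i | i
            · exact (ENNReal.measurable_ofReal.comp
                ((hcont i).mul (fcont i)).measurable).aemeasurable
            · exact (ENNReal.measurable_ofReal.comp
                (((hcont i).pow n).inv₀
                  (fun u => (pow_pos (hpos i u) n).ne')).measurable).aemeasurable)
          (p := Sum.elim (fun i => (1 - r i) * (n : ℝ)⁻¹) (fun i => r i * (n : ℝ)⁻¹))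
          (by
            rw [Fintype.sum_sum_type]
            simp only [Sum.elim_inl, Sum.elim_inr]
            rw [← Finset.sum_add_distrib]
            have : ∀ i : Fin n, (1 - r i) * (n : ℝ)⁻¹ + r i * (n : ℝ)⁻¹ = (n : ℝ)⁻¹ := by
              intro i; ring
            simp_rw [this, Finset.sum_const, Finset.card_univ, Fintype.card_fin, nsmul_eq_mul]
            field_simp)
          (fun j _ => by
            rcases j with i | i
            · exact mul_nonneg (by linarith [(hr i).2]) (by positivity)
            · exact mul_nonneg (hr i).1 (by positivity))
        simp_rw [Fintype.prod_sum_type, Sum.elim_inl, Sum.elim_inr] at hHolder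
        calc ∫⁻ u, ∏ i, A i u ^ ((1 - r i) * (n : ℝ)⁻¹) * B i u ^ (r i * (n : ℝ)⁻¹) ∂μ
            = ∫⁻ u, (∏ i, A i u ^ ((1 - r i) * (n : ℝ)⁻¹))
              * ∏ i, B i u ^ (r i * (n : ℝ)⁻¹) ∂μ := by
              simp_rw [Finset.prod_mul_distrib]
          _ ≤ (∏ i, (∫⁻ u, A i u ∂μ) ^ ((1 - r i) * (n : ℝ)⁻¹))
              * ∏ i, (∫⁻ u, B i u ∂μ) ^ (r i * (n : ℝ)⁻¹) := hHolder
          _ = ∏ i, (∫⁻ u, A i u ∂μ) ^ ((1 - r i) * (n : ℝ)⁻¹)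
              * (∫⁻ u, B i u ∂μ) ^ (r i * (n : ℝ)⁻¹) := by
              rw [Finset.prod_mul_distrib]
    _ = ∏ i, (ENNReal.ofReal (φ i 1) * ENNReal.ofReal (V i) ^ (1 - r i)
          * ENNReal.ofReal (P i) ^ (r i)) ^ ((n : ℝ)⁻¹) := by
        have hAint : ∀ i, ∫⁻ u, A i u ∂μ = ENNReal.ofReal (V i) := by
          intro i
          rw [← idA i]
          exact (MeasureTheory.ofReal_integral_eq_lintegral_ofReal (IA i)
            (Filter.Eventually.of_forall (fun u => (hrn i u).le))).symm
        have hBint : ∀ i, ∫⁻ u, B i u ∂μ = ENNReal.ofReal (P i) := by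
          intro i
          rw [← idB i]
          exact (MeasureTheory.ofReal_integral_eq_lintegral_ofReal (IB i)
            (Filter.Eventually.of_forall (fun u => (hbn i u).le))).symm
        simp_rw [hAint, hBint]
        rw [← Finset.prod_mul_distrib]
        refine Finset.prod_congr rfl (fun i _ => ?_)
        rw [ENNReal.mul_rpow_of_nonneg _ _ (by positivity),
          ENNReal.mul_rpow_of_nonneg _ _ (by positivity),
          ← ENNReal.rpow_mul, ← ENNReal.rpow_mul]
        ring

section Main

variable {n : ℕ}

theorem stmt14' (hn : 2 ≤ n)
    (hK fK hP fP : Fin n → Metric.sphere (0 : EuclideanSpace ℝ (Fin n)) 1 → ℝ)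
    (hKpos : ∀ i u, 0 < hK i u) (fKpos : ∀ i u, 0 < fK i u)
    (hPpos : ∀ i u, 0 < hP i u) (fPpos : ∀ i u, 0 < fP i u)
    (hKcont : ∀ i, Continuous (hK i)) (fKcont : ∀ i, Continuous (fK i))
    (hPcont : ∀ i, Continuous (hP i)) (fPcont : ∀ i, Continuous (fP i))
    (vol pvol : Fin n → ℝ)
    (hvol0 : ∀ i, 0 ≤ vol i) (hpvol0 : ∀ i, 0 ≤ pvol i)
    (hid1 : ∀ i, ∫ u, hK i u * fK i u ∂(μH[(n - 1 : ℝ)]) = n * vol i)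
    (hid2 : ∀ i, ∫ u, (hK i u ^ (n : ℕ))⁻¹ ∂(μH[(n - 1 : ℝ)]) = n * pvol i)
    (hid3 : ∀ i, ∫ u, hP i u * fP i u ∂(μH[(n - 1 : ℝ)]) = n * pvol i)
    (hid4 : ∀ i, ∫ u, (hP i u ^ (n : ℕ))⁻¹ ∂(μH[(n - 1 : ℝ)]) = n * vol i)
    (φ : Fin n → ℝ → ℝ) (hφpos : ∀ i t, 0 < t → 0 < φ i t)
    (r : Fin n → ℝ) (hr : ∀ i, 0 ≤ r i ∧ r i < 1)
    (hhom : ∀ i, ∀ l t : ℝ, 0 < l → 0 < t → φ i (l * t) = l ^ r i * φ i t) :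
    (∫ u, ∏ i, (φ i (1 / (fK i u * hK i u ^ (n + 1))) * hK i u * fK i u) ^ ((n : ℝ)⁻¹)
        ∂(μH[(n - 1 : ℝ)]))
      * (∫ u, ∏ i, (φ i (1 / (fP i u * hP i u ^ (n + 1))) * hP i u * fP i u) ^ ((n : ℝ)⁻¹)
          ∂(μH[(n - 1 : ℝ)]))
      ≤ (n : ℝ) ^ 2 * ∏ i, (φ i 1 ^ 2 * vol i * pvol i) ^ ((n : ℝ)⁻¹) := by
  have hn0 : (n : ℝ) ≠ 0 := by positivity
  have hα : Metric.sphere (0 : EuclideanSpace ℝ (Fin n)) 1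
      = Metric.sphere (0 : EuclideanSpace ℝ (Fin n)) 1 := rfl
  set μ : Measure (Metric.sphere (0 : EuclideanSpace ℝ (Fin n)) 1) := μH[(n - 1 : ℝ)] with hμdef
  -- nonempty sphere
  haveI : Nonempty (Fin n) := ⟨⟨0, by omega⟩⟩
  haveI : Nontrivial (EuclideanSpace ℝ (Fin n)) := inferInstance
  haveI : Nonempty (Metric.sphere (0 : EuclideanSpace ℝ (Fin n)) 1) := (NormedSpace.sphere_nonempty.mpr zero_le_one).coe_sort
  -- basic positivity
  have hbase : ∀ i, 0 ≤ φ i 1 ^ 2 * vol i * pvol i := fun i =>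
    mul_nonneg (mul_nonneg (sq_nonneg _) (hvol0 i)) (hpvol0 i)
  have hRHS0 : 0 ≤ (n : ℝ) ^ 2 * ∏ i, (φ i 1 ^ 2 * vol i * pvol i) ^ ((n : ℝ)⁻¹) :=
    mul_nonneg (by positivity)
      (Finset.prod_nonneg fun i _ => Real.rpow_nonneg (hbase i) _)
  -- the two integrands, rewritten in continuous form
  have hptK : ∀ u i, φ i (1 / (fK i u * hK i u ^ (n + 1))) * hK i u * fK i u
      = φ i 1 * ((hK i u * fK i u) ^ (1 - r i) * ((hK i u ^ n)⁻¹) ^ (r i)) := fun u i =>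
    pt_alg (hKpos i u) (fKpos i u) (φ i) (hφpos i) (hhom i)
  have hptP : ∀ u i, φ i (1 / (fP i u * hP i u ^ (n + 1))) * hP i u * fP i u
      = φ i 1 * ((hP i u * fP i u) ^ (1 - r i) * ((hP i u ^ n)⁻¹) ^ (r i)) := fun u i =>
    pt_alg (hPpos i u) (fPpos i u) (φ i) (hφpos i) (hhom i)
  have contG : ∀ (h f : Fin n → Metric.sphere (0 : EuclideanSpace ℝ (Fin n)) 1 → ℝ), (∀ i, Continuous (h i)) → (∀ i, Continuous (f i)) →
      (∀ i u, 0 < h i u) →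
      Continuous (fun u => ∏ i, (φ i 1 * ((h i u * f i u) ^ (1 - r i)
        * ((h i u ^ n)⁻¹) ^ (r i))) ^ ((n : ℝ)⁻¹)) := by
    intro h f hc fc hp
    refine continuous_finset_prod _ (fun i _ => ?_)
    refine Continuous.rpow_const ?_ (fun u => Or.inr (by positivity))
    refine continuous_const.mul (Continuous.mul ?_ ?_)
    · exact ((hc i).mul (fc i)).rpow_const (fun u => Or.inr (by linarith [(hr i).2]))
    · exact (((hc i).pow n).inv₀ (fun u => (pow_pos (hp i u) n).ne')).rpow_const
        (fun u => Or.inr (hr i).1)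
  have posG : ∀ (h f : Fin n → Metric.sphere (0 : EuclideanSpace ℝ (Fin n)) 1 → ℝ), (∀ i u, 0 < h i u) → (∀ i u, 0 < f i u) →
      ∀ u, 0 < ∏ i, (φ i 1 * ((h i u * f i u) ^ (1 - r i)
        * ((h i u ^ n)⁻¹) ^ (r i))) ^ ((n : ℝ)⁻¹) := by
    intro h f hp fp u
    refine Finset.prod_pos (fun i _ => Real.rpow_pos_of_pos ?_ _)
    have h1 := hφpos i 1 one_pos
    have h2 : (0:ℝ) < (h i u * f i u) ^ (1 - r i) :=
      Real.rpow_pos_of_pos (mul_pos (hp i u) (fp i u)) _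
    have h3 : (0:ℝ) < ((h i u ^ n)⁻¹) ^ (r i) :=
      Real.rpow_pos_of_pos (inv_pos.2 (pow_pos (hp i u) n)) _
    exact mul_pos h1 (mul_pos h2 h3)
  by_cases hfin : μ Set.univ = (⊤ : ENNReal)
  · -- infinite measure: the first integral vanishes
    have hGK := contG hK fK hKcont fKcont hKpos
    have hint : ¬ Integrable (fun u => ∏ i, (φ i (1 / (fK i u * hK i u ^ (n + 1)))
        * hK i u * fK i u) ^ ((n : ℝ)⁻¹)) μ := by
      intro hi
      have hEq : (fun u => ∏ i, (φ i (1 / (fK i u * hK i u ^ (n + 1)))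
          * hK i u * fK i u) ^ ((n : ℝ)⁻¹))
          = fun u => ∏ i, (φ i 1 * ((hK i u * fK i u) ^ (1 - r i)
            * ((hK i u ^ n)⁻¹) ^ (r i))) ^ ((n : ℝ)⁻¹) := by
        funext u; exact Finset.prod_congr rfl (fun i _ => by rw [hptK u i])
      rw [hEq] at hi
      obtain ⟨u₀, -, hmin⟩ := isCompact_univ.exists_isMinOn Set.univ_nonempty
        (hGK.continuousOn)
      have hε := posG hK fK hKpos fKpos u₀
      have hlt := hi.measure_ge_lt_top hε
      have huniv : {u | (∏ i, (φ i 1 * ((hK i u₀ * fK i u₀) ^ (1 - r i)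
          * ((hK i u₀ ^ n)⁻¹) ^ (r i))) ^ ((n : ℝ)⁻¹))
            ≤ ∏ i, (φ i 1 * ((hK i u * fK i u) ^ (1 - r i)
          * ((hK i u ^ n)⁻¹) ^ (r i))) ^ ((n : ℝ)⁻¹)} = Set.univ :=
        Set.eq_univ_of_forall (fun u => hmin (Set.mem_univ u))
      rw [huniv, hfin] at hlt
      exact (lt_irrefl _ hlt).elim
    rw [integral_undef hint, zero_mul]
    exact hRHS0
  · haveI : IsFiniteMeasure μ := ⟨lt_top_iff_ne_top.2 hfin⟩
    have hinv0 : (0:ℝ) ≤ (n : ℝ)⁻¹ := by positivity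
    -- Bochner integrals as toReal of lintegrals
    have hEq1 : (fun u => ∏ i, (φ i (1 / (fK i u * hK i u ^ (n + 1)))
        * hK i u * fK i u) ^ ((n : ℝ)⁻¹))
        = fun u => ∏ i, (φ i 1 * ((hK i u * fK i u) ^ (1 - r i)
          * ((hK i u ^ n)⁻¹) ^ (r i))) ^ ((n : ℝ)⁻¹) := by
      funext u; exact Finset.prod_congr rfl (fun i _ => by rw [hptK u i])
    have hEq2 : (fun u => ∏ i, (φ i (1 / (fP i u * hP i u ^ (n + 1)))
        * hP i u * fP i u) ^ ((n : ℝ)⁻¹))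
        = fun u => ∏ i, (φ i 1 * ((hP i u * fP i u) ^ (1 - r i)
          * ((hP i u ^ n)⁻¹) ^ (r i))) ^ ((n : ℝ)⁻¹) := by
      funext u; exact Finset.prod_congr rfl (fun i _ => by rw [hptP u i])
    have hI1 : ∫ u, ∏ i, (φ i (1 / (fK i u * hK i u ^ (n + 1)))
        * hK i u * fK i u) ^ ((n : ℝ)⁻¹) ∂μ
        = (∫⁻ u, ENNReal.ofReal (∏ i, (φ i (1 / (fK i u * hK i u ^ (n + 1)))
          * hK i u * fK i u) ^ ((n : ℝ)⁻¹)) ∂μ).toReal := by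
      refine integral_eq_lintegral_of_nonneg_ae (Filter.Eventually.of_forall (fun u => ?_)) ?_
      · exact Finset.prod_nonneg (fun i _ => Real.rpow_nonneg (by
          have h0 : 0 < φ i (1 / (fK i u * hK i u ^ (n + 1))) :=
            hφpos i _ (one_div_pos.2 (mul_pos (fKpos i u) (pow_pos (hKpos i u) _)))
          exact (mul_pos (mul_pos h0 (hKpos i u)) (fKpos i u)).le) _)
      · rw [hEq1]
        exact (contG hK fK hKcont fKcont hKpos).aestronglyMeasurable
    have hI2 : ∫ u, ∏ i, (φ i (1 / (fP i u * hP i u ^ (n + 1)))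
        * hP i u * fP i u) ^ ((n : ℝ)⁻¹) ∂μ
        = (∫⁻ u, ENNReal.ofReal (∏ i, (φ i (1 / (fP i u * hP i u ^ (n + 1)))
          * hP i u * fP i u) ^ ((n : ℝ)⁻¹)) ∂μ).toReal := by
      refine integral_eq_lintegral_of_nonneg_ae (Filter.Eventually.of_forall (fun u => ?_)) ?_
      · exact Finset.prod_nonneg (fun i _ => Real.rpow_nonneg (by
          have h0 : 0 < φ i (1 / (fP i u * hP i u ^ (n + 1))) :=
            hφpos i _ (one_div_pos.2 (mul_pos (fPpos i u) (pow_pos (hPpos i u) _)))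
          exact (mul_pos (mul_pos h0 (hPpos i u)) (fPpos i u)).le) _)
      · rw [hEq2]
        exact (contG hP fP hPcont fPcont hPpos).aestronglyMeasurable
    have hL1 := key_bound hn μ hK fK hKpos fKpos hKcont fKcont
      (fun i => (n : ℝ) * vol i) (fun i => (n : ℝ) * pvol i) hid1 hid2 φ hφpos r hr hhom
    have hL2 := key_bound hn μ hP fP hPpos fPpos hPcont fPcont
      (fun i => (n : ℝ) * pvol i) (fun i => (n : ℝ) * vol i) hid3 hid4 φ hφpos r hr hhom
    -- the combined bound, as an `ENNReal.ofReal`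
    have hRR : (∏ i, (ENNReal.ofReal (φ i 1) * ENNReal.ofReal ((n : ℝ) * vol i) ^ (1 - r i)
          * ENNReal.ofReal ((n : ℝ) * pvol i) ^ (r i)) ^ ((n : ℝ)⁻¹))
        * (∏ i, (ENNReal.ofReal (φ i 1) * ENNReal.ofReal ((n : ℝ) * pvol i) ^ (1 - r i)
          * ENNReal.ofReal ((n : ℝ) * vol i) ^ (r i)) ^ ((n : ℝ)⁻¹))
        = ENNReal.ofReal ((n : ℝ) ^ 2 * ∏ i, (φ i 1 ^ 2 * vol i * pvol i) ^ ((n : ℝ)⁻¹)) := by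
      have hA : (n : ℝ) ^ 2 * ∏ i, (φ i 1 ^ 2 * vol i * pvol i) ^ ((n : ℝ)⁻¹)
          = ∏ i, ((n : ℝ) ^ 2 * (φ i 1 ^ 2 * vol i * pvol i)) ^ ((n : ℝ)⁻¹) := by
        rw [Finset.prod_congr rfl (fun i (_ : i ∈ Finset.univ) =>
            Real.mul_rpow (sq_nonneg ((n : ℝ))) (hbase i)),
          Finset.prod_mul_distrib, Finset.prod_const, Finset.card_univ, Fintype.card_fin,
          ← Real.rpow_natCast ((((n : ℝ) ^ 2)) ^ ((n : ℝ)⁻¹)) n,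
          ← Real.rpow_mul (sq_nonneg _), inv_mul_cancel₀ hn0, Real.rpow_one]
      rw [hA, ENNReal.ofReal_prod_of_nonneg (fun i _ =>
        Real.rpow_nonneg (mul_nonneg (sq_nonneg _) (hbase i)) _),
        ← Finset.prod_mul_distrib]
      refine Finset.prod_congr rfl (fun i _ => ?_)
      rw [← ENNReal.ofReal_rpow_of_nonneg (mul_nonneg (sq_nonneg _) (hbase i)) hinv0,
        ← ENNReal.mul_rpow_of_nonneg _ _ hinv0]
      congr 1
      have hc : (0:ℝ) ≤ φ i 1 := (hφpos i 1 one_pos).le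
      have hVnn : (0:ℝ) ≤ (n : ℝ) * vol i := mul_nonneg (n.cast_nonneg) (hvol0 i)
      have hPnn : (0:ℝ) ≤ (n : ℝ) * pvol i := mul_nonneg (n.cast_nonneg) (hpvol0 i)
      have hV : ENNReal.ofReal ((n : ℝ) * vol i) ^ (1 - r i)
          * ENNReal.ofReal ((n : ℝ) * vol i) ^ (r i) = ENNReal.ofReal ((n : ℝ) * vol i) := by
        rw [← ENNReal.rpow_add_of_nonneg _ _ (by linarith [(hr i).2]) (hr i).1,
          sub_add_cancel, ENNReal.rpow_one]
      have hPP : ENNReal.ofReal ((n : ℝ) * pvol i) ^ (1 - r i)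
          * ENNReal.ofReal ((n : ℝ) * pvol i) ^ (r i) = ENNReal.ofReal ((n : ℝ) * pvol i) := by
        rw [← ENNReal.rpow_add_of_nonneg _ _ (by linarith [(hr i).2]) (hr i).1,
          sub_add_cancel, ENNReal.rpow_one]
      calc ENNReal.ofReal (φ i 1) * ENNReal.ofReal ((n : ℝ) * vol i) ^ (1 - r i)
            * ENNReal.ofReal ((n : ℝ) * pvol i) ^ (r i)
          * (ENNReal.ofReal (φ i 1) * ENNReal.ofReal ((n : ℝ) * pvol i) ^ (1 - r i)
            * ENNReal.ofReal ((n : ℝ) * vol i) ^ (r i))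
          = ENNReal.ofReal (φ i 1) * ENNReal.ofReal (φ i 1)
            * (ENNReal.ofReal ((n : ℝ) * vol i) ^ (1 - r i)
              * ENNReal.ofReal ((n : ℝ) * vol i) ^ (r i))
            * (ENNReal.ofReal ((n : ℝ) * pvol i) ^ (1 - r i)
              * ENNReal.ofReal ((n : ℝ) * pvol i) ^ (r i)) := by ring
        _ = ENNReal.ofReal (φ i 1) * ENNReal.ofReal (φ i 1)
            * ENNReal.ofReal ((n : ℝ) * vol i) * ENNReal.ofReal ((n : ℝ) * pvol i) := by
            rw [hV, hPP]
        _ = ENNReal.ofReal ((n : ℝ) ^ 2 * (φ i 1 ^ 2 * vol i * pvol i)) := by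
            rw [← ENNReal.ofReal_mul hc, ← ENNReal.ofReal_mul (mul_nonneg hc hc),
              ← ENNReal.ofReal_mul (mul_nonneg (mul_nonneg hc hc) hVnn)]
            congr 1
            ring
    rw [hI1, hI2, ← ENNReal.toReal_mul]
    refine le_trans (ENNReal.toReal_mono ENNReal.ofReal_ne_top ?_)
      (le_of_eq (ENNReal.toReal_ofReal hRHS0))
    calc _ ≤ _ := mul_le_mul' hL1 hL2
      _ = _ := hRR

end Main

/-- Santaló-type inequality
`as(φ₁,K₁;…;φ_n,K_n)·as(φ₁,K₁°;…;φ_n,K_n°) ≤ n² ∏ᵢ [φᵢ(1)² |Kᵢ| |Kᵢ°|]^{1/n}`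
for `C²₊` bodies `Kᵢ` and `φᵢ ∈ Conc(0,∞)` homogeneous of degrees `rᵢ ∈ [0,1)`.
Each body `Kᵢ` and its polar are encoded by support functions `hK i`, `hP i` and curvature
functions `fK i`, `fP i`, linked to the volumes `vol i = |Kᵢ|` and `pvol i = |Kᵢ°|` by the
standard integral identities. -/
theorem stmt14 {n : ℕ} (hn : 2 ≤ n)
    (K : Fin n → Set (EuclideanSpace ℝ (Fin n)))
    (hKconv : ∀ i, Convex ℝ (K i)) (hKcomp : ∀ i, IsCompact (K i))
    (hK0 : ∀ i, (0 : EuclideanSpace ℝ (Fin n)) ∈ interior (K i))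
    (hK fK hP fP : Fin n → Metric.sphere (0 : EuclideanSpace ℝ (Fin n)) 1 → ℝ)
    (hKpos : ∀ i u, 0 < hK i u) (fKpos : ∀ i u, 0 < fK i u)
    (hPpos : ∀ i u, 0 < hP i u) (fPpos : ∀ i u, 0 < fP i u)
    (hKcont : ∀ i, Continuous (hK i)) (fKcont : ∀ i, Continuous (fK i))
    (hPcont : ∀ i, Continuous (hP i)) (fPcont : ∀ i, Continuous (fP i))
    (vol pvol : Fin n → ℝ)
    (hvol : ∀ i, vol i = (volume (K i)).toReal)
    (hpvol : ∀ i, pvol i = (volume {y : EuclideanSpace ℝ (Fin n) |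
      ∀ x ∈ K i, (inner ℝ x y : ℝ) ≤ 1}).toReal)
    (hid1 : ∀ i, ∫ u, hK i u * fK i u ∂(μH[(n - 1 : ℝ)]) = n * vol i)
    (hid2 : ∀ i, ∫ u, (hK i u ^ (n : ℕ))⁻¹ ∂(μH[(n - 1 : ℝ)]) = n * pvol i)
    (hid3 : ∀ i, ∫ u, hP i u * fP i u ∂(μH[(n - 1 : ℝ)]) = n * pvol i)
    (hid4 : ∀ i, ∫ u, (hP i u ^ (n : ℕ))⁻¹ ∂(μH[(n - 1 : ℝ)]) = n * vol i)
    (φ : Fin n → ℝ → ℝ) (hφ : ∀ i, MemConc (φ i))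
    (r : Fin n → ℝ) (hr : ∀ i, 0 ≤ r i ∧ r i < 1)
    (hhom : ∀ i, ∀ l t : ℝ, 0 < l → 0 < t → φ i (l * t) = l ^ r i * φ i t) :
    (∫ u, ∏ i, (φ i (1 / (fK i u * hK i u ^ (n + 1))) * hK i u * fK i u) ^ ((n : ℝ)⁻¹)
        ∂(μH[(n - 1 : ℝ)]))
      * (∫ u, ∏ i, (φ i (1 / (fP i u * hP i u ^ (n + 1))) * hP i u * fP i u) ^ ((n : ℝ)⁻¹)
          ∂(μH[(n - 1 : ℝ)]))
      ≤ (n : ℝ) ^ 2 * ∏ i, (φ i 1 ^ 2 * vol i * pvol i) ^ ((n : ℝ)⁻¹) := by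
  exact stmt14' hn hK fK hP fP hKpos fKpos hPpos fPpos hKcont fKcont hPcont fPcont vol pvol
    (fun i => (hvol i) ▸ ENNReal.toReal_nonneg) (fun i => (hpvol i) ▸ ENNReal.toReal_nonneg)
    hid1 hid2 hid3 hid4 φ (fun i => (hφ i).1) r hr hhom
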